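/- arXiv:2308.03112 — 2 statements merged into one kernel-verified Lean document; each statement's English description precedes it below -/
import Mathlib

section
/- Let α > 0, ζ > −1, and v, δ ∈ ℝ. Set α₁ = −δ, α₂ = δ, and define ψ₁, ψ₂ : ℝ × ℝ → ℂ by ψ₁(x,t) = √(2α/(1+ζ))·sech(√(2α)(x − vt))·exp(i[(v − δ)x − ((v² − δ²)/2 − α)t]) and ψ₂(x,t) = √(2α/(1+ζ))·sech(√(2α)(x − vt))·exp(i[(v + δ)x − ((v² − δ²)/2 − α)t]). Then for every x ∈ ℝ and t ∈ ℝ and for j = 1, 2, the pair (ψ₁, ψ₂) satisfies the coupled nonlinear Schrödinger system i·∂ψⱼ/∂t + (1/2)·∂²ψⱼ/∂x² − i·αⱼ·∂ψⱼ/∂x + fⱼ(|ψ₁|², |ψ₂|²)·ψⱼ = 0, where f₁(a,b) = a + ζb and f₂(a,b) = ζa + b. -/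
open Real Complex

noncomputable def Psi (a k d0 b d : ℝ) (s : ℝ) : ℂ :=
  (a : ℂ) * ((Real.cosh (k * s + d0))⁻¹ : ℝ) *
    Complex.exp (Complex.I * ((b * s + d : ℝ) : ℂ))

noncomputable def Psi' (a k d0 b d : ℝ) (s : ℝ) : ℂ :=
  (a : ℂ) * ((-(k * Real.sinh (k * s + d0)) / (Real.cosh (k * s + d0)) ^ 2 : ℝ) : ℂ) *
      Complex.exp (Complex.I * ((b * s + d : ℝ) : ℂ))
    + (a : ℂ) * ((Real.cosh (k * s + d0))⁻¹ : ℝ) *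
      (Complex.I * b * Complex.exp (Complex.I * ((b * s + d : ℝ) : ℂ)))

noncomputable def Psi'' (a k d0 b d : ℝ) (s : ℝ) : ℂ :=
  ((a : ℂ) * ((k ^ 2 * (2 * (Real.sinh (k * s + d0)) ^ 2 - (Real.cosh (k * s + d0)) ^ 2)
        / (Real.cosh (k * s + d0)) ^ 3 : ℝ) : ℂ) *
      Complex.exp (Complex.I * ((b * s + d : ℝ) : ℂ))
    + (a : ℂ) * ((-(k * Real.sinh (k * s + d0)) / (Real.cosh (k * s + d0)) ^ 2 : ℝ) : ℂ) *
      (Complex.I * b * Complex.exp (Complex.I * ((b * s + d : ℝ) : ℂ))))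
  + ((a : ℂ) * ((-(k * Real.sinh (k * s + d0)) / (Real.cosh (k * s + d0)) ^ 2 : ℝ) : ℂ) *
      (Complex.I * b * Complex.exp (Complex.I * ((b * s + d : ℝ) : ℂ)))
    + (a : ℂ) * ((Real.cosh (k * s + d0))⁻¹ : ℝ) *
      (Complex.I * b * (Complex.I * b * Complex.exp (Complex.I * ((b * s + d : ℝ) : ℂ)))))

lemma cosh_ne (u : ℝ) : Real.cosh u ≠ 0 := (Real.cosh_pos u).ne'

lemma hasDerivAt_lin (k d0 s : ℝ) : HasDerivAt (fun s : ℝ => k * s + d0) k s := by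
  simpa using ((hasDerivAt_id s).const_mul k).add_const d0

lemma hasDerivAt_sech (k d0 s : ℝ) :
    HasDerivAt (fun s : ℝ => (Real.cosh (k * s + d0))⁻¹)
      (-(k * Real.sinh (k * s + d0)) / (Real.cosh (k * s + d0)) ^ 2) s := by
  have h2 := (Real.hasDerivAt_cosh (k * s + d0)).comp s (hasDerivAt_lin k d0 s)
  have h3 := h2.inv (cosh_ne _)
  refine h3.congr_deriv ?_
  simp only [Function.comp_apply]
  ring

lemma hasDerivAt_sechd (k d0 s : ℝ) :
    HasDerivAt (fun s : ℝ => -(k * Real.sinh (k * s + d0)) / (Real.cosh (k * s + d0)) ^ 2)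
      (k ^ 2 * (2 * (Real.sinh (k * s + d0)) ^ 2 - (Real.cosh (k * s + d0)) ^ 2)
        / (Real.cosh (k * s + d0)) ^ 3) s := by
  have hnum : HasDerivAt (fun s : ℝ => -(k * Real.sinh (k * s + d0)))
      (-(k * (Real.cosh (k * s + d0) * k))) s := by
    exact (((Real.hasDerivAt_sinh (k * s + d0)).comp s (hasDerivAt_lin k d0 s)).const_mul k).neg
  have hden : HasDerivAt (fun s : ℝ => (Real.cosh (k * s + d0)) ^ 2)
      (2 * Real.cosh (k * s + d0) ^ 1 * (Real.sinh (k * s + d0) * k)) s := by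
    exact ((Real.hasDerivAt_cosh (k * s + d0)).comp s (hasDerivAt_lin k d0 s)).pow 2
  have h := hnum.div hden (pow_ne_zero 2 (cosh_ne _))
  refine h.congr_deriv ?_
  field_simp [cosh_ne]
  ring

lemma hasDerivAt_phase (b d s : ℝ) :
    HasDerivAt (fun s : ℝ => Complex.exp (Complex.I * ((b * s + d : ℝ) : ℂ)))
      (Complex.I * b * Complex.exp (Complex.I * ((b * s + d : ℝ) : ℂ))) s := by
  have h1 : HasDerivAt (fun s : ℝ => Complex.I * ((b * s + d : ℝ) : ℂ)) (Complex.I * b) s := by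
    have h0 : HasDerivAt (fun s : ℝ => ((b * s + d : ℝ) : ℂ)) (b : ℂ) s := by
      have : HasDerivAt (fun s : ℝ => (b * s + d : ℝ)) b s := hasDerivAt_lin b d s
      exact_mod_cast this.ofReal_comp
    simpa using h0.const_mul Complex.I
  simpa [mul_comm] using h1.cexp

lemma hasDerivAt_Psi (a k d0 b d s : ℝ) :
    HasDerivAt (Psi a k d0 b d) (Psi' a k d0 b d s) s := by
  have hg : HasDerivAt (fun s : ℝ => (((Real.cosh (k * s + d0))⁻¹ : ℝ) : ℂ))
      ((-(k * Real.sinh (k * s + d0)) / (Real.cosh (k * s + d0)) ^ 2 : ℝ) : ℂ) s :=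
    (hasDerivAt_sech k d0 s).ofReal_comp
  exact ((hg.const_mul (a : ℂ)).mul (hasDerivAt_phase b d s))

lemma hasDerivAt_Psi' (a k d0 b d s : ℝ) :
    HasDerivAt (Psi' a k d0 b d) (Psi'' a k d0 b d s) s := by
  have hr : HasDerivAt
      (fun s : ℝ => ((-(k * Real.sinh (k * s + d0)) / (Real.cosh (k * s + d0)) ^ 2 : ℝ) : ℂ))
      ((k ^ 2 * (2 * (Real.sinh (k * s + d0)) ^ 2 - (Real.cosh (k * s + d0)) ^ 2)
        / (Real.cosh (k * s + d0)) ^ 3 : ℝ) : ℂ) s := (hasDerivAt_sechd k d0 s).ofReal_comp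
  have hg : HasDerivAt (fun s : ℝ => (((Real.cosh (k * s + d0))⁻¹ : ℝ) : ℂ))
      ((-(k * Real.sinh (k * s + d0)) / (Real.cosh (k * s + d0)) ^ 2 : ℝ) : ℂ) s :=
    (hasDerivAt_sech k d0 s).ofReal_comp
  exact ((hr.const_mul (a : ℂ)).mul (hasDerivAt_phase b d s)).add
    ((hg.const_mul (a : ℂ)).mul ((hasDerivAt_phase b d s).const_mul (Complex.I * b)))

lemma aux (a k w b c aj : ℝ) (him : b = w + aj)
    (hre : c - b ^ 2 / 2 + aj * b + k ^ 2 / 2 = 0) (x t : ℝ) :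
    Complex.I * deriv (fun τ : ℝ => Psi a (-(k * w)) (k * x) (-c) (b * x) τ) t
      + (1 / 2 : ℂ) * deriv (deriv (fun y : ℝ => Psi a k (-(k * w * t)) b (-(c * t)) y)) x
      - Complex.I * (aj : ℂ) * deriv (fun y : ℝ => Psi a k (-(k * w * t)) b (-(c * t)) y) x
      + ((k ^ 2 * ((Real.cosh (k * x + -(k * w * t)))⁻¹) ^ 2 : ℝ) : ℂ)
          * Psi a k (-(k * w * t)) b (-(c * t)) x = 0 := by
  have h1 : deriv (fun τ : ℝ => Psi a (-(k * w)) (k * x) (-c) (b * x) τ) t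
      = Psi' a (-(k * w)) (k * x) (-c) (b * x) t :=
    (hasDerivAt_Psi a (-(k * w)) (k * x) (-c) (b * x) t).deriv
  have hD : deriv (fun y : ℝ => Psi a k (-(k * w * t)) b (-(c * t)) y)
      = fun y => Psi' a k (-(k * w * t)) b (-(c * t)) y :=
    funext fun y => (hasDerivAt_Psi a k (-(k * w * t)) b (-(c * t)) y).deriv
  rw [h1, hD]
  have h2 : deriv (fun y : ℝ => Psi' a k (-(k * w * t)) b (-(c * t)) y) x
      = Psi'' a k (-(k * w * t)) b (-(c * t)) x :=
    (hasDerivAt_Psi' a k (-(k * w * t)) b (-(c * t)) x).deriv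
  rw [h2]
  simp only [Psi, Psi', Psi'']
  rw [show -(k * w) * t + k * x = k * x + -(k * w * t) from by ring,
    show -c * t + b * x = b * x + -(c * t) from by ring]
  set u : ℝ := k * x + -(k * w * t) with hu
  set p : ℝ := b * x + -(c * t) with hp
  have hC2 : Real.cosh u ^ 2 = Real.sinh u ^ 2 + 1 := Real.cosh_sq u
  set S := Real.sinh u with hSdef
  set C := Real.cosh u with hCdef
  have hCne : (C : ℂ) ≠ 0 := Complex.ofReal_ne_zero.mpr (hCdef ▸ cosh_ne u)
  have hS2 : (S : ℂ) ^ 2 = (C : ℂ) ^ 2 - 1 := by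
    have : S ^ 2 = C ^ 2 - 1 := by linarith
    exact_mod_cast congrArg (fun r : ℝ => (r : ℂ)) this
  have haj : (aj : ℂ) = (b : ℂ) - (w : ℂ) := by
    rw [him]; push_cast; ring
  have hk2 : (k : ℂ) ^ 2 = (b : ℂ) ^ 2 - 2 * c - 2 * (aj : ℂ) * b := by
    have : k ^ 2 = b ^ 2 - 2 * c - 2 * aj * b := by linarith
    exact_mod_cast congrArg (fun r : ℝ => (r : ℂ)) this
  push_cast
  rw [hS2, hk2, haj]
  ring_nf
  field_simp [hCne]
  ring_nf
  rw [Complex.I_sq]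
  ring

lemma comp (α ζ v δ b aj : ℝ) (hα : 0 < α) (hζ : -1 < ζ)
    (hb : b = v + aj)
    (hre : ((v ^ 2 - δ ^ 2) / 2 - α) - b ^ 2 / 2 + aj * b + α = 0)
    (ψ : ℝ × ℝ → ℂ)
    (hψ : ∀ x t : ℝ, ψ (x, t) =
      (Real.sqrt (2 * α / (1 + ζ)) : ℂ)
        * ((Real.cosh (Real.sqrt (2 * α) * (x - v * t)))⁻¹ : ℝ)
        * Complex.exp (Complex.I *
            ((b * x - ((v ^ 2 - δ ^ 2) / 2 - α) * t : ℝ) : ℂ)))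
    (x t : ℝ) :
    Complex.I * deriv (fun τ : ℝ => ψ (x, τ)) t
      + (1 / 2 : ℂ) * deriv (deriv (fun y : ℝ => ψ (y, t))) x
      - Complex.I * (aj : ℂ) * deriv (fun y : ℝ => ψ (y, t)) x
      + ((2 * α * ((Real.cosh (Real.sqrt (2 * α) * (x - v * t)))⁻¹) ^ 2 : ℝ) : ℂ)
          * ψ (x, t) = 0 := by
  set A : ℝ := Real.sqrt (2 * α / (1 + ζ)) with hA
  set k : ℝ := Real.sqrt (2 * α) with hk
  set c : ℝ := (v ^ 2 - δ ^ 2) / 2 - α with hc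
  have hk2 : k ^ 2 = 2 * α := Real.sq_sqrt (by positivity)
  have hx : (fun y : ℝ => ψ (y, t)) = fun y => Psi A k (-(k * v * t)) b (-(c * t)) y := by
    funext y
    rw [hψ]
    simp only [Psi]
    rw [show k * y + -(k * v * t) = k * (y - v * t) from by ring,
      show b * y + -(c * t) = b * y - c * t from by ring]
  have ht : (fun τ : ℝ => ψ (x, τ)) = fun τ => Psi A (-(k * v)) (k * x) (-c) (b * x) τ := by
    funext τ
    rw [hψ]
    simp only [Psi]
    rw [show -(k * v) * τ + k * x = k * (x - v * τ) from by ring,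
      show -c * τ + b * x = b * x - c * τ from by ring]
  have hval : ψ (x, t) = Psi A k (-(k * v * t)) b (-(c * t)) x := congrFun hx x
  have hcoef : ((2 * α * ((Real.cosh (k * (x - v * t)))⁻¹) ^ 2 : ℝ) : ℂ)
      = ((k ^ 2 * ((Real.cosh (k * x + -(k * v * t)))⁻¹) ^ 2 : ℝ) : ℂ) := by
    rw [hk2, show k * x + -(k * v * t) = k * (x - v * t) from by ring]
  rw [hx, ht, hval, hcoef]
  exact aux A k v b c aj hb (by rw [hk2]; linarith) x t

/-- The two-component soliton pair
`ψⱼ(x,t) = √(2α/(1+ζ))·sech(√(2α)(x − vt))·exp(i[(v ∓ δ)x − ((v² − δ²)/2 − α)t])`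
satisfies the coupled nonlinear Schrödinger system
`i·∂ψⱼ/∂t + (1/2)·∂²ψⱼ/∂x² − i·αⱼ·∂ψⱼ/∂x + fⱼ(|ψ₁|², |ψ₂|²)·ψⱼ = 0`
with `α₁ = −δ`, `α₂ = δ`, `f₁(a,b) = a + ζb`, `f₂(a,b) = ζa + b`. -/
theorem stmt_2 (α ζ v δ : ℝ) (hα : 0 < α) (hζ : -1 < ζ)
    (α₁ α₂ : ℝ) (hα₁ : α₁ = -δ) (hα₂ : α₂ = δ)
    (f₁ f₂ : ℝ → ℝ → ℝ)
    (hf₁ : ∀ a b : ℝ, f₁ a b = a + ζ * b)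
    (hf₂ : ∀ a b : ℝ, f₂ a b = ζ * a + b)
    (ψ₁ ψ₂ : ℝ × ℝ → ℂ)
    (hψ₁ : ∀ x t : ℝ, ψ₁ (x, t) =
      (Real.sqrt (2 * α / (1 + ζ)) : ℂ)
        * ((Real.cosh (Real.sqrt (2 * α) * (x - v * t)))⁻¹ : ℝ)
        * Complex.exp (Complex.I *
            (((v - δ) * x - ((v ^ 2 - δ ^ 2) / 2 - α) * t : ℝ) : ℂ)))
    (hψ₂ : ∀ x t : ℝ, ψ₂ (x, t) =
      (Real.sqrt (2 * α / (1 + ζ)) : ℂ)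
        * ((Real.cosh (Real.sqrt (2 * α) * (x - v * t)))⁻¹ : ℝ)
        * Complex.exp (Complex.I *
            (((v + δ) * x - ((v ^ 2 - δ ^ 2) / 2 - α) * t : ℝ) : ℂ))) :
    ∀ x t : ℝ,
      (Complex.I * deriv (fun τ : ℝ => ψ₁ (x, τ)) t
          + (1 / 2 : ℂ) * deriv (deriv (fun y : ℝ => ψ₁ (y, t))) x
          - Complex.I * (α₁ : ℂ) * deriv (fun y : ℝ => ψ₁ (y, t)) x
          + (f₁ (‖ψ₁ (x, t)‖ ^ 2) (‖ψ₂ (x, t)‖ ^ 2) : ℂ)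
              * ψ₁ (x, t) = 0)
      ∧ (Complex.I * deriv (fun τ : ℝ => ψ₂ (x, τ)) t
          + (1 / 2 : ℂ) * deriv (deriv (fun y : ℝ => ψ₂ (y, t))) x
          - Complex.I * (α₂ : ℂ) * deriv (fun y : ℝ => ψ₂ (y, t)) x
          + (f₂ (‖ψ₁ (x, t)‖ ^ 2) (‖ψ₂ (x, t)‖ ^ 2) : ℂ)
              * ψ₂ (x, t) = 0) := by
  intro x t
  have h1ζ : (0 : ℝ) < 1 + ζ := by linarith
  have hcosh0 : (0 : ℝ) ≤ (Real.cosh (Real.sqrt (2 * α) * (x - v * t)))⁻¹ :=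
    inv_nonneg.2 (Real.cosh_pos _).le
  have habs : ∀ (b : ℝ) (ψ : ℝ × ℝ → ℂ),
      (∀ x t : ℝ, ψ (x, t) =
        (Real.sqrt (2 * α / (1 + ζ)) : ℂ)
          * ((Real.cosh (Real.sqrt (2 * α) * (x - v * t)))⁻¹ : ℝ)
          * Complex.exp (Complex.I *
              ((b * x - ((v ^ 2 - δ ^ 2) / 2 - α) * t : ℝ) : ℂ))) →
      ‖ψ (x, t)‖ ^ 2
        = 2 * α / (1 + ζ) * ((Real.cosh (Real.sqrt (2 * α) * (x - v * t)))⁻¹) ^ 2 := by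
    intro b ψ hψ
    rw [hψ x t, norm_mul, norm_mul, Complex.norm_real, Complex.norm_real, Real.norm_eq_abs,
      Real.norm_eq_abs, Complex.norm_exp]
    have hre : (Complex.I * ((b * x - ((v ^ 2 - δ ^ 2) / 2 - α) * t : ℝ) : ℂ)).re = 0 := by
      generalize (b * x - ((v ^ 2 - δ ^ 2) / 2 - α) * t : ℝ) = r
      simp
    rw [hre, Real.exp_zero, mul_one, _root_.abs_of_nonneg (Real.sqrt_nonneg _),
      _root_.abs_of_nonneg hcosh0, mul_pow, Real.sq_sqrt (by positivity)]
  have habs1 := habs (v - δ) ψ₁ hψ₁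
  have habs2 := habs (v + δ) ψ₂ hψ₂
  constructor
  · have hfc : ((f₁ (‖ψ₁ (x, t)‖ ^ 2) (‖ψ₂ (x, t)‖ ^ 2) : ℝ) : ℂ)
        = ((2 * α * ((Real.cosh (Real.sqrt (2 * α) * (x - v * t)))⁻¹) ^ 2 : ℝ) : ℂ) := by
      rw [hf₁, habs1, habs2]
      norm_cast
      field_simp
    rw [hfc, hα₁]
    exact comp α ζ v δ (v - δ) (-δ) hα hζ (by ring) (by ring) ψ₁ hψ₁ x t
  · have hfc : ((f₂ (‖ψ₁ (x, t)‖ ^ 2) (‖ψ₂ (x, t)‖ ^ 2) : ℝ) : ℂ)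
        = ((2 * α * ((Real.cosh (Real.sqrt (2 * α) * (x - v * t)))⁻¹) ^ 2 : ℝ) : ℂ) := by
      rw [hf₂, habs1, habs2]
      norm_cast
      field_simp
      ring
    rw [hfc, hα₂]
    exact comp α ζ v δ (v + δ) δ hα hζ (by ring) (by ring) ψ₂ hψ₂ x t
end

section
/- Let β > 0 and let h : ℝ → ℂ be a Schwartz function. For t > 0 define u(x,t) = (4πβt)^{−1/2}·e^{−iπ/4}·∫_ℝ exp(i(x−s)²/(4βt))·h(s) ds. Then for every x ∈ ℝ, u(x,t) → h(x) as t → 0⁺. -/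
open MeasureTheory Real Filter Complex FourierTransform
open scoped Topology

lemma cpow_real_mul_I_half {r : ℝ} (hr : 0 < r) :
    ((r : ℂ) * Complex.I) ^ (1/2 : ℂ)
      = (Real.sqrt r : ℂ) * Complex.exp (Complex.I * (π/4 : ℝ)) := by
  have hz : (r : ℂ) * Complex.I ≠ 0 := by
    simp [Complex.ext_iff, hr.ne']
  rw [Complex.cpow_def_of_ne_zero hz, Complex.log_ofReal_mul hr Complex.I_ne_zero,
    Complex.log_I]
  rw [show ((Real.log r : ℂ) + ↑π/2 * Complex.I) * (1/2 : ℂ)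
      = ((Real.log r / 2 : ℝ) : ℂ) + Complex.I * ((π/4 : ℝ) : ℂ) by push_cast; ring,
    Complex.exp_add]
  congr 1
  rw [← Complex.ofReal_exp]
  norm_cast
  rw [← Real.log_sqrt hr.le, Real.exp_log (Real.sqrt_pos.2 hr)]

lemma inner_gauss (x ξ : ℝ) {b : ℂ} (hb : 0 < b.re) :
    ∫ s : ℝ, Complex.exp (-b * ((x - s : ℝ):ℂ)^2) * Complex.exp (((2*π*(ξ*s) : ℝ):ℂ) * Complex.I)
      = (↑π / b) ^ (1/2:ℂ) * (Complex.exp (-(π:ℂ)^2/b * ξ^2) *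
          Complex.exp (((2*π*(ξ*x) : ℝ):ℂ) * Complex.I)) := by
  have hb0 : b ≠ 0 := fun hb0 => by simp [hb0] at hb
  have h1 : ∀ s : ℝ, Complex.exp (-b * ((x - s : ℝ):ℂ)^2) * Complex.exp (((2*π*(ξ*s):ℝ):ℂ) * Complex.I)
      = Complex.exp ((-b) * (s:ℂ)^2 + (2*b*x + 2*π*ξ*Complex.I) * s + (-b * x^2)) := by
    intro s; rw [← Complex.exp_add]; congr 1; push_cast; ring
  simp_rw [h1]
  rw [integral_cexp_quadratic (by simpa using hb) _ _, neg_neg]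
  rw [← Complex.exp_add]
  congr 1
  have : ((2:ℂ)*b*x + 2*π*ξ*Complex.I)^2 = 4*b^2*x^2 + 8*π*b*x*ξ*Complex.I - 4*π^2*ξ^2 := by
    ring_nf
    simp [Complex.I_sq]
    ring
  rw [this]
  field_simp
  push_cast; ring

lemma hg_inv (h : SchwartzMap ℝ ℂ) (y : ℝ) :
    (∫ ξ : ℝ, Complex.exp (((2*π*(ξ*y) : ℝ):ℂ) * Complex.I) * 𝓕 (⇑h) ξ) = h y := by
  have h1 : Integrable (𝓕 (⇑h)) := by
    have := (SchwartzMap.fourierTransformCLM ℂ h).integrable (μ := volume)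
    rwa [SchwartzMap.fourierTransformCLM_apply] at this
  have h2 := h.continuous.fourierInv_fourier_eq h.integrable h1
  calc (∫ ξ : ℝ, Complex.exp (((2*π*(ξ*y) : ℝ):ℂ) * Complex.I) * 𝓕 (⇑h) ξ)
      = 𝓕⁻ (𝓕 (⇑h)) y := by
        rw [Real.fourierInv_eq']
        simp [smul_eq_mul, RCLike.inner_apply, mul_comm]
    _ = h y := by rw [h2]

lemma key_identity (h : SchwartzMap ℝ ℂ) (x : ℝ) {b : ℂ} (hb : 0 < b.re) :
    ∫ s : ℝ, Complex.exp (-b * ((x - s : ℝ):ℂ)^2) * h s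
      = (↑π / b) ^ (1/2:ℂ) *
        ∫ ξ : ℝ, Complex.exp (-(π:ℂ)^2/b * ξ^2) *
          (Complex.exp (((2*π*(ξ*x) : ℝ):ℂ) * Complex.I) * 𝓕 (⇑h) ξ) := by
  set g : ℝ → ℂ := 𝓕 (⇑h) with hg
  have hg_cont : Continuous g := by
    rw [hg, ← SchwartzMap.fourier_coe, ← SchwartzMap.fourierTransformCLM_apply (𝕜 := ℂ)]
    exact (SchwartzMap.fourierTransformCLM ℂ h).continuous
  have hg_int : Integrable g := by
    have := (SchwartzMap.fourierTransformCLM ℂ h).integrable (μ := volume)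
    rwa [SchwartzMap.fourierTransformCLM_apply] at this
  -- integrability on the product
  have hF_int : Integrable (fun p : ℝ × ℝ =>
      Complex.exp (-b * ((x - p.1 : ℝ):ℂ)^2) *
        (Complex.exp (((2*π*(p.2*p.1) : ℝ):ℂ) * Complex.I) * g p.2))
      (volume.prod volume) := by
    have hcont : Continuous (fun p : ℝ × ℝ =>
        Complex.exp (-b * ((x - p.1 : ℝ):ℂ)^2) *
          (Complex.exp (((2*π*(p.2*p.1) : ℝ):ℂ) * Complex.I) * g p.2)) := by
      fun_prop
    have hmaj : Integrable (fun p : ℝ × ℝ =>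
        Real.exp (-b.re * (x - p.1)^2) * ‖g p.2‖) (volume.prod volume) := by
      have hA : Integrable (fun s : ℝ => Real.exp (-b.re * (x - s)^2)) := by
        have : Integrable (fun s : ℝ => Complex.exp (-b * ((x - s : ℝ):ℂ)^2)) := by
          have h2 : ∀ s : ℝ, Complex.exp (-b * ((x - s : ℝ):ℂ)^2)
              = Complex.exp ((-b) * (s:ℂ)^2 + (2*b*x) * s + (-b*x^2)) := by
            intro s; congr 1; push_cast; ring
          simp_rw [h2]
          exact integrable_cexp_quadratic' (by simpa using hb) _ _
        have hn := this.norm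
        refine hn.congr (Filter.Eventually.of_forall fun s => ?_)
        have h3 : (-b * ((x - s:ℝ):ℂ)^2) = -b * (((x-s)^2 : ℝ):ℂ) := by push_cast; ring
        show ‖Complex.exp (-b * ((x - s:ℝ):ℂ)^2)‖ = Real.exp (-b.re * (x - s)^2)
        rw [h3, Complex.norm_exp]
        simp only [Complex.mul_re, Complex.neg_re, Complex.neg_im, Complex.ofReal_re,
          Complex.ofReal_im, mul_zero, sub_zero, neg_mul]
      exact hA.mul_prod hg_int.norm
    refine hmaj.mono' hcont.aestronglyMeasurable (Filter.Eventually.of_forall fun p => ?_)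
    simp only [norm_mul, Complex.norm_exp]
    have h1 : (-b * ((x - p.1 : ℝ):ℂ)^2).re = -b.re * (x - p.1)^2 := by
      have : (-b * ((x - p.1:ℝ):ℂ)^2) = -b * (((x-p.1)^2 : ℝ):ℂ) := by push_cast; ring
      rw [this]
      simp only [Complex.mul_re, Complex.neg_re, Complex.neg_im, Complex.ofReal_re,
        Complex.ofReal_im, mul_zero, sub_zero, neg_mul]
    have h2 : ((((2*π*(p.2*p.1) : ℝ)):ℂ) * Complex.I).re = 0 := by simp
    rw [h1, h2, Real.exp_zero, one_mul]
  calc ∫ s : ℝ, Complex.exp (-b * ((x - s : ℝ):ℂ)^2) * h s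
      = ∫ s : ℝ, ∫ ξ : ℝ, Complex.exp (-b * ((x - s : ℝ):ℂ)^2) *
          (Complex.exp (((2*π*(ξ*s) : ℝ):ℂ) * Complex.I) * g ξ) := by
        congr 1; ext s
        rw [MeasureTheory.integral_const_mul]
        congr 1
        exact (hg_inv h s).symm
    _ = ∫ ξ : ℝ, ∫ s : ℝ, Complex.exp (-b * ((x - s : ℝ):ℂ)^2) *
          (Complex.exp (((2*π*(ξ*s) : ℝ):ℂ) * Complex.I) * g ξ) := by
        exact MeasureTheory.integral_integral_swap hF_int
    _ = ∫ ξ : ℝ, (∫ s : ℝ, Complex.exp (-b * ((x - s : ℝ):ℂ)^2) *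
          Complex.exp (((2*π*(ξ*s) : ℝ):ℂ) * Complex.I)) * g ξ := by
        congr 1; ext ξ
        simp_rw [← mul_assoc]
        rw [MeasureTheory.integral_mul_const]
    _ = (↑π / b) ^ (1/2:ℂ) * ∫ ξ : ℝ, Complex.exp (-(π:ℂ)^2/b * ξ^2) *
          (Complex.exp (((2*π*(ξ*x) : ℝ):ℂ) * Complex.I) * g ξ) := by
        rw [← MeasureTheory.integral_const_mul]
        congr 1; ext ξ
        rw [inner_gauss x ξ hb]; ring

lemma key_identity' (h : SchwartzMap ℝ ℂ) (x : ℝ) {a : ℝ} (ha : 0 < a) :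
    ∫ s : ℝ, Complex.exp (-(-(a:ℂ)*Complex.I) * ((x - s : ℝ):ℂ)^2) * h s
      = (↑π / (-(a:ℂ)*Complex.I)) ^ (1/2:ℂ) *
        ∫ ξ : ℝ, Complex.exp (-(π:ℂ)^2/(-(a:ℂ)*Complex.I) * ξ^2) *
          (Complex.exp (((2*π*(ξ*x) : ℝ):ℂ) * Complex.I) * 𝓕 (⇑h) ξ) := by
  set b0 : ℂ := -(a:ℂ)*Complex.I with hb0def
  have hb0 : b0 ≠ 0 := by
    simp [hb0def, Complex.ext_iff, ha.ne']
  set g : ℝ → ℂ := 𝓕 (⇑h) with hg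
  have hg_cont : Continuous g := by
    rw [hg, ← SchwartzMap.fourier_coe, ← SchwartzMap.fourierTransformCLM_apply (𝕜 := ℂ)]
    exact (SchwartzMap.fourierTransformCLM ℂ h).continuous
  have hg_int : Integrable g := by
    have := (SchwartzMap.fourierTransformCLM ℂ h).integrable (μ := volume)
    rwa [SchwartzMap.fourierTransformCLM_apply] at this
  have htb : Tendsto (fun ε : ℝ => (ε:ℂ) + b0) (𝓝[>] 0) (𝓝 b0) := by
    have : Tendsto (fun ε : ℝ => (ε:ℂ) + b0) (𝓝 0) (𝓝 ((0:ℂ) + b0)) :=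
      (Complex.continuous_ofReal.tendsto 0).add_const b0
    simpa using this.mono_left nhdsWithin_le_nhds
  -- LHS tendsto
  have hL : Tendsto (fun ε : ℝ => ∫ s : ℝ, Complex.exp (-((ε:ℂ)+b0) * ((x - s : ℝ):ℂ)^2) * h s)
      (𝓝[>] 0) (𝓝 (∫ s : ℝ, Complex.exp (-b0 * ((x - s : ℝ):ℂ)^2) * h s)) := by
    apply tendsto_integral_filter_of_dominated_convergence (bound := fun s => ‖h s‖)
    · filter_upwards with ε
      exact (Continuous.mul (by fun_prop) h.continuous).aestronglyMeasurable
    · filter_upwards [self_mem_nhdsWithin] with ε hε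
      filter_upwards with s
      rw [norm_mul]
      have hre : (-((ε:ℂ)+b0) * ((x - s : ℝ):ℂ)^2).re = -ε * (x-s)^2 := by
        have : -((ε:ℂ)+b0) * ((x - s : ℝ):ℂ)^2
            = (((x-s)^2 : ℝ):ℂ) * (-((ε:ℂ)+b0)) := by push_cast; ring
        rw [this, Complex.re_ofReal_mul]
        simp [hb0def]; ring
      have h1 : ‖Complex.exp (-((ε:ℂ)+b0) * ((x - s : ℝ):ℂ)^2)‖ ≤ 1 := by
        rw [Complex.norm_exp, hre]
        apply Real.exp_le_one_iff.2
        have : (0:ℝ) ≤ ε * (x-s)^2 := mul_nonneg (le_of_lt hε) (sq_nonneg _)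
        nlinarith
      calc ‖Complex.exp (-((ε:ℂ)+b0) * ((x - s : ℝ):ℂ)^2)‖ * ‖h s‖
          ≤ 1 * ‖h s‖ := by gcongr
        _ = ‖h s‖ := one_mul _
    · exact h.integrable.norm
    · filter_upwards with s
      have hc : Continuous (fun b : ℂ => Complex.exp (-b * ((x - s : ℝ):ℂ)^2) * h s) := by
        fun_prop
      exact (hc.tendsto b0).comp htb
  -- RHS tendsto
  have hK : Tendsto (fun ε : ℝ => ∫ ξ : ℝ, Complex.exp (-(π:ℂ)^2/((ε:ℂ)+b0) * ξ^2) *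
        (Complex.exp (((2*π*(ξ*x) : ℝ):ℂ) * Complex.I) * g ξ))
      (𝓝[>] 0) (𝓝 (∫ ξ : ℝ, Complex.exp (-(π:ℂ)^2/b0 * ξ^2) *
        (Complex.exp (((2*π*(ξ*x) : ℝ):ℂ) * Complex.I) * g ξ))) := by
    apply tendsto_integral_filter_of_dominated_convergence (bound := fun ξ => ‖g ξ‖)
    · filter_upwards with ε
      exact (Continuous.mul (by fun_prop) (Continuous.mul (by fun_prop) hg_cont)).aestronglyMeasurable
    · filter_upwards [self_mem_nhdsWithin] with ε hε
      filter_upwards with ξ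
      have hbe : ((ε:ℂ)+b0) ≠ 0 := by
        simp [hb0def, Complex.ext_iff, ha.ne']
      have hrw : -(π:ℂ)^2/((ε:ℂ)+b0) * ξ^2 = ((-(π^2 * ξ^2) : ℝ):ℂ) * ((ε:ℂ)+b0)⁻¹ := by
        push_cast; ring
      have h1 : ‖Complex.exp (-(π:ℂ)^2/((ε:ℂ)+b0) * ξ^2)‖ ≤ 1 := by
        rw [Complex.norm_exp, hrw, Complex.re_ofReal_mul]
        apply Real.exp_le_one_iff.2
        apply mul_nonpos_of_nonpos_of_nonneg
        · nlinarith [sq_nonneg (π * ξ)]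
        · rw [Complex.inv_re]
          apply div_nonneg _ (Complex.normSq_nonneg _)
          simp [hb0def, le_of_lt (Set.mem_Ioi.1 hε)]
      have h2 : ‖Complex.exp (((2*π*(ξ*x) : ℝ):ℂ) * Complex.I)‖ = 1 := by
        rw [Complex.norm_exp]
        simp
      rw [norm_mul, norm_mul, h2, one_mul]
      calc ‖Complex.exp (-(π:ℂ)^2/((ε:ℂ)+b0) * ξ^2)‖ * ‖g ξ‖
          ≤ 1 * ‖g ξ‖ := by gcongr
        _ = ‖g ξ‖ := one_mul _
    · exact hg_int.norm
    · filter_upwards with ξ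
      have hc : ContinuousAt (fun b : ℂ => Complex.exp (-(π:ℂ)^2/b * ξ^2) *
          (Complex.exp (((2*π*(ξ*x) : ℝ):ℂ) * Complex.I) * g ξ)) b0 := by
        apply ContinuousAt.mul _ continuousAt_const
        apply Complex.continuous_exp.continuousAt.comp
        exact (((continuousAt_const.div continuousAt_id hb0)).mul continuousAt_const)
      exact hc.tendsto.comp htb
  have hpow : Tendsto (fun ε : ℝ => (↑π / ((ε:ℂ)+b0)) ^ (1/2:ℂ))
      (𝓝[>] 0) (𝓝 ((↑π / b0) ^ (1/2:ℂ))) := by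
    have hmem : (↑π / b0) ∈ Complex.slitPlane := by
      rw [Complex.mem_slitPlane_iff]
      right
      rw [hb0def]
      rw [show (↑π / (-(a:ℂ)*Complex.I)) = ((π/a : ℝ):ℂ) * Complex.I by
        rw [div_eq_iff (by simp [Complex.ext_iff, ha.ne'])]; push_cast
        field_simp
        ring_nf
        simp [Complex.I_sq]
        rw [mul_inv_cancel₀ (Complex.ofReal_ne_zero.2 ha.ne')]]
      simp [Real.pi_ne_zero, ha.ne', div_eq_mul_inv, Real.pi_pos.ne']
    have c2 : ContinuousAt (fun z : ℂ => z ^ (1/2:ℂ)) (↑π / b0) :=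
      continuousAt_cpow_const hmem
    have c1 : ContinuousAt (fun b : ℂ => (π:ℂ) / b) b0 :=
      continuousAt_const.div continuousAt_id hb0
    exact ((c2.comp c1).tendsto).comp htb
  have heq : ∀ᶠ ε : ℝ in 𝓝[>] 0,
      (∫ s : ℝ, Complex.exp (-((ε:ℂ)+b0) * ((x - s : ℝ):ℂ)^2) * h s)
        = (↑π / ((ε:ℂ)+b0)) ^ (1/2:ℂ) *
          ∫ ξ : ℝ, Complex.exp (-(π:ℂ)^2/((ε:ℂ)+b0) * ξ^2) *
            (Complex.exp (((2*π*(ξ*x) : ℝ):ℂ) * Complex.I) * g ξ) := by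
    filter_upwards [self_mem_nhdsWithin] with ε hε
    apply key_identity h x
    simp [hb0def]
    exact hε
  exact tendsto_nhds_unique (hL.congr' heq) (hpow.mul hK)

/-- For `β > 0` and Schwartz `h`, the free Schrödinger propagator
`u(x,t) = (4πβt)^{−1/2}·e^{−iπ/4}·∫ exp(i(x−s)²/(4βt))·h(s) ds` recovers the
initial data: `u(x,t) → h(x)` as `t → 0⁺`, for every `x ∈ ℝ`. -/
theorem stmt_8 (β : ℝ) (hβ : 0 < β) (h : SchwartzMap ℝ ℂ) (u : ℝ → ℝ → ℂ)
    (hu : ∀ x t : ℝ, u x t =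
      ((Real.sqrt (4 * π * β * t))⁻¹ : ℝ) * Complex.exp (-Complex.I * (π / 4 : ℝ))
        * ∫ s : ℝ, Complex.exp (Complex.I * (((x - s) ^ 2 / (4 * β * t) : ℝ) : ℂ)) * h s) :
    ∀ x : ℝ, Tendsto (fun t : ℝ => u x t) (nhdsWithin 0 (Set.Ioi 0)) (nhds (h x)) := by
  intro x
  set g : ℝ → ℂ := 𝓕 (⇑h) with hg
  have hg_cont : Continuous g := by
    rw [hg, ← SchwartzMap.fourier_coe, ← SchwartzMap.fourierTransformCLM_apply (𝕜 := ℂ)]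
    exact (SchwartzMap.fourierTransformCLM ℂ h).continuous
  have hg_int : Integrable g := by
    have := (SchwartzMap.fourierTransformCLM ℂ h).integrable (μ := volume)
    rwa [SchwartzMap.fourierTransformCLM_apply] at this
  -- step 1: for t > 0, u x t equals the Fourier multiplier formula
  have hstep : ∀ t : ℝ, 0 < t →
      u x t = ∫ ξ : ℝ, Complex.exp (((-(π^2*(4*β*t)*ξ^2) : ℝ):ℂ) * Complex.I) *
        (Complex.exp (((2*π*(ξ*x) : ℝ):ℂ) * Complex.I) * g ξ) := by
    intro t ht
    have h4 : (0:ℝ) < 4 * β * t := by positivity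
    set a : ℝ := (4 * β * t)⁻¹ with hadef
    have ha : 0 < a := by positivity
    have hb0 : -(a:ℂ)*Complex.I ≠ 0 := by
      simp [Complex.ext_iff, ha.ne']
    have hmatch : ∀ s : ℝ, Complex.exp (Complex.I * (((x - s) ^ 2 / (4 * β * t) : ℝ) : ℂ))
        = Complex.exp (-(-(a:ℂ)*Complex.I) * ((x - s : ℝ):ℂ)^2) := by
      intro s
      congr 1
      rw [hadef]
      push_cast
      rw [div_eq_mul_inv]
      ring
    have hexp : ∀ ξ : ℝ, -(π:ℂ)^2/(-(a:ℂ)*Complex.I) * (ξ:ℂ)^2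
        = ((-(π^2*(4*β*t)*ξ^2) : ℝ):ℂ) * Complex.I := by
      intro ξ
      rw [div_mul_eq_mul_div, div_eq_iff hb0, hadef]
      push_cast
      have h40 : ((4:ℂ) * β * t) ≠ 0 := by
        exact_mod_cast Complex.ofReal_ne_zero.2 h4.ne'
      field_simp
      ring_nf
      simp [Complex.I_sq]
      rw [mul_right_comm _ (t:ℂ), mul_inv_cancel_right₀ (Complex.ofReal_ne_zero.2 hβ.ne'), mul_inv_cancel_right₀ (Complex.ofReal_ne_zero.2 ht.ne')]
    have hconst : (((Real.sqrt (4 * π * β * t))⁻¹ : ℝ) : ℂ) * Complex.exp (-Complex.I * (π / 4 : ℝ))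
        * ((↑π / (-(a:ℂ)*Complex.I)) ^ (1/2:ℂ)) = 1 := by
      have hpisq : (0:ℝ) < 4 * π * β * t := by positivity
      have hdiv : (↑π / (-(a:ℂ)*Complex.I)) = (((4 * π * β * t : ℝ)):ℂ) * Complex.I := by
        rw [div_eq_iff hb0, hadef]
        push_cast
        have h40 : ((4:ℂ) * β * t) ≠ 0 := by
          exact_mod_cast Complex.ofReal_ne_zero.2 h4.ne'
        field_simp
        ring_nf
        simp [Complex.I_sq]
        rw [mul_right_comm _ (t:ℂ), mul_inv_cancel₀ (Complex.ofReal_ne_zero.2 hβ.ne'), one_mul, mul_inv_cancel₀ (Complex.ofReal_ne_zero.2 ht.ne')]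
      rw [hdiv, cpow_real_mul_I_half hpisq]
      have hs0 : (Real.sqrt (4 * π * β * t) : ℂ) ≠ 0 :=
        Complex.ofReal_ne_zero.2 (Real.sqrt_pos.2 hpisq).ne'
      rw [show (((Real.sqrt (4 * π * β * t))⁻¹ : ℝ) : ℂ) = ((Real.sqrt (4 * π * β * t) : ℝ):ℂ)⁻¹
        by push_cast; ring]
      calc ((Real.sqrt (4 * π * β * t) : ℝ):ℂ)⁻¹ * Complex.exp (-Complex.I * ↑(π / 4))
            * (↑(Real.sqrt (4 * π * β * t)) * Complex.exp (Complex.I * ↑(π/4)))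
          = (((Real.sqrt (4 * π * β * t) : ℝ):ℂ)⁻¹ * ↑(Real.sqrt (4 * π * β * t)))
            * (Complex.exp (-Complex.I * ↑(π / 4)) * Complex.exp (Complex.I * ↑(π/4))) := by ring
        _ = 1 := by
            rw [inv_mul_cancel₀ hs0, ← Complex.exp_add]
            simp
    rw [hu x t]
    simp_rw [hmatch]
    rw [key_identity' h x ha, ← mul_assoc, hconst, one_mul]
    congr 1
    ext ξ
    rw [hexp ξ]
  -- step 2: the limit
  have hlim : Tendsto (fun t : ℝ => ∫ ξ : ℝ, Complex.exp (((-(π^2*(4*β*t)*ξ^2) : ℝ):ℂ) * Complex.I) *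
      (Complex.exp (((2*π*(ξ*x) : ℝ):ℂ) * Complex.I) * g ξ)) (𝓝[>] (0:ℝ))
      (𝓝 (∫ ξ : ℝ, Complex.exp (((2*π*(ξ*x) : ℝ):ℂ) * Complex.I) * g ξ)) := by
    apply tendsto_integral_filter_of_dominated_convergence (bound := fun ξ => ‖g ξ‖)
    · filter_upwards with t
      exact (Continuous.mul (by fun_prop) (Continuous.mul (by fun_prop) hg_cont)).aestronglyMeasurable
    · filter_upwards with t
      filter_upwards with ξ
      have h1 : ‖Complex.exp (((-(π^2*(4*β*t)*ξ^2) : ℝ):ℂ) * Complex.I)‖ = 1 := by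
        rw [Complex.norm_exp, Complex.re_ofReal_mul]
        simp
      have h2 : ‖Complex.exp (((2*π*(ξ*x) : ℝ):ℂ) * Complex.I)‖ = 1 := by
        rw [Complex.norm_exp]
        simp
      rw [norm_mul, norm_mul, h1, h2, one_mul, one_mul]
    · exact hg_int.norm
    · filter_upwards with ξ
      have hc : Continuous (fun t : ℝ => Complex.exp (((-(π^2*(4*β*t)*ξ^2) : ℝ):ℂ) * Complex.I) *
          (Complex.exp (((2*π*(ξ*x) : ℝ):ℂ) * Complex.I) * g ξ)) := by fun_prop
      have := (hc.tendsto 0).mono_left (nhdsWithin_le_nhds (s := Set.Ioi (0:ℝ)))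
      simpa using this
  have hfin : (∫ ξ : ℝ, Complex.exp (((2*π*(ξ*x) : ℝ):ℂ) * Complex.I) * g ξ) = h x := hg_inv h x
  rw [← hfin]
  apply Tendsto.congr' _ hlim
  filter_upwards [self_mem_nhdsWithin] with t ht
  exact (hstep t ht).symm
end
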